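/- Assume λ ≠ 0 and that −λ is not an eigenvalue of A_1 + ⋯ + A_p, i.e. det(A_1 + ⋯ + A_p + λI_n) ≠ 0. Then ker G'_0 = {0}, and the linear map induced by Ã is a well-defined linear isomorphism φ from the quotient space ℂ^{pn}/(K + L_λ) onto the subspace Im Ã satisfying φ ∘ Ḡ_j = (G'_j restricted to Im Ã) ∘ φ for every j = 1,…,p; that is, the middle convolution mc_λ(A_1,…,A_p) is equivalent to the tuple of restrictions of G'_1,…,G'_p to Im Ã = Im A_1 ⊕ ⋯ ⊕ Im A_p. -/

import Mathlib

open Matrix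

/-- The block matrix `G_j ∈ M(pn,ℂ)`: its `j`-th block row is
`(A_1, …, A_{j-1}, A_j + λI, A_{j+1}, …, A_p)` and all other block rows vanish. -/
noncomputable def Gmat (n p : ℕ) (A : Fin p → Matrix (Fin n) (Fin n) ℂ) (lam : ℂ)
    (j : Fin p) : Matrix (Fin p × Fin n) (Fin p × Fin n) ℂ :=
  fun x y => if x.1 = j then
    (A y.1 + if y.1 = j then lam • (1 : Matrix (Fin n) (Fin n) ℂ) else 0) x.2 y.2
  else 0

/-- The block matrix `G'_j ∈ M(pn,ℂ)`: its `j`-th block row is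
`(A_j, …, A_j, A_j + λI, A_j, …, A_j)` (with `A_j + λI` in block column `j`)
and all other block rows vanish. -/
noncomputable def Gmat' (n p : ℕ) (A : Fin p → Matrix (Fin n) (Fin n) ℂ) (lam : ℂ)
    (j : Fin p) : Matrix (Fin p × Fin n) (Fin p × Fin n) ℂ :=
  fun x y => if x.1 = j then
    (A j + if y.1 = j then lam • (1 : Matrix (Fin n) (Fin n) ℂ) else 0) x.2 y.2
  else 0

/-- The block-diagonal matrix `Ã = diag(A_1,…,A_p) ∈ M(pn,ℂ)`. -/
noncomputable def Atil (n p : ℕ) (A : Fin p → Matrix (Fin n) (Fin n) ℂ) :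
    Matrix (Fin p × Fin n) (Fin p × Fin n) ℂ :=
  fun x y => if x.1 = y.1 then A x.1 x.2 y.2 else 0

/-- Key commutation identity: `G'_j Ã = Ã G_j`. -/
lemma gmat'_mul_atil (n p : ℕ) (A : Fin p → Matrix (Fin n) (Fin n) ℂ) (lam : ℂ) (j : Fin p) :
    Gmat' n p A lam j * Atil n p A = Atil n p A * Gmat n p A lam j := by
  ext ⟨i,a⟩ ⟨k,b⟩
  simp only [mul_apply, Fintype.sum_prod_type, Gmat, Gmat', Atil]
  by_cases hij : i = j
  · subst hij
    by_cases hkj : k = i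
    · subst hkj
      simp only [if_pos rfl]
      rw [Finset.sum_comm]
      simp only [Finset.sum_ite_eq, Finset.mem_univ, if_true]
      simp [Matrix.add_apply, Matrix.smul_apply, Matrix.one_apply, add_mul, mul_add,
        Finset.sum_add_distrib, mul_ite, ite_mul, mul_comm]
    · simp only [if_pos rfl, if_neg hkj]
      rw [Finset.sum_comm]
      simp only [Finset.sum_ite_eq, Finset.mem_univ, if_true]
      simp [if_neg hkj]
  · simp [hij]

lemma sumG'_mulVec (n p : ℕ) (A : Fin p → Matrix (Fin n) (Fin n) ℂ) (lam : ℂ)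
    (x : Fin p × Fin n → ℂ) (i : Fin p) (a : Fin n) :
    (∑ k, Gmat' n p A lam k).mulVec x (i,a)
      = (A i).mulVec (fun c => ∑ l, x (l,c)) a + lam * x (i,a) := by
  simp only [mulVec, dotProduct, Finset.sum_apply, Matrix.sum_apply, Gmat',
    Fintype.sum_prod_type]
  rw [Finset.sum_comm]
  simp only [Finset.sum_ite_eq, Finset.mem_univ, if_true, Matrix.add_apply, ite_apply,
    Matrix.zero_apply, Matrix.smul_apply, Matrix.one_apply, smul_eq_mul, add_mul,
    Finset.sum_add_distrib, Finset.mul_sum, ite_mul, zero_mul, mul_ite, mul_zero, mul_one]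
  congr 1
  rw [Finset.sum_comm]
  have h2 : ∀ l : Fin p, ∀ c : Fin n,
      ((if l = i then lam • (1:Matrix (Fin n) (Fin n) ℂ) else 0) a c)
        = if l = i then lam * (if a = c then 1 else 0) else 0 := by
    intro l c
    split <;> simp [Matrix.one_apply]
  simp only [h2, ite_mul, zero_mul, mul_ite, mul_one, mul_zero]
  simp [Finset.sum_ite_eq, Finset.sum_ite_eq']

lemma sumG_mulVec (n p : ℕ) (A : Fin p → Matrix (Fin n) (Fin n) ℂ) (lam : ℂ)
    (x : Fin p × Fin n → ℂ) (i : Fin p) (a : Fin n) :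
    (∑ k, Gmat n p A lam k).mulVec x (i,a)
      = (∑ l, (A l).mulVec (fun c => x (l,c))) a + lam * x (i,a) := by
  simp only [mulVec, dotProduct, Finset.sum_apply, Matrix.sum_apply, Gmat,
    Fintype.sum_prod_type]
  rw [Finset.sum_comm]
  simp only [Finset.sum_ite_eq, Finset.mem_univ, if_true, Matrix.add_apply, add_mul,
    Finset.sum_add_distrib]
  congr 1
  · rw [Finset.sum_comm]
  · rw [Finset.sum_comm]
    have h2 : ∀ l : Fin p, ∀ c : Fin n,
        ((if l = i then lam • (1:Matrix (Fin n) (Fin n) ℂ) else 0) a c)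
          = if l = i then lam * (if a = c then 1 else 0) else 0 := by
      intro l c
      split <;> simp [Matrix.one_apply]
    simp only [h2, ite_mul, zero_mul, mul_ite, mul_one, mul_zero]
    simp [Finset.sum_ite_eq, Finset.sum_ite_eq']


lemma sum_mulVec' {m : Type*} [Fintype m] {ι : Type*} (s : Finset ι)
    (M : ι → Matrix m m ℂ) (v : m → ℂ) :
    (∑ l ∈ s, M l).mulVec v = ∑ l ∈ s, (M l).mulVec v := by
  funext i
  simp only [mulVec, dotProduct, Matrix.sum_apply, Finset.sum_apply, Finset.sum_mul]
  rw [Finset.sum_comm]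

/-- If `λ ≠ 0` and `det(A_1+⋯+A_p+λI) ≠ 0`, then `ker G'_0 = 0` and the
map induced by `Ã` is a linear isomorphism `φ : ℂ^{pn}/(K + L_λ) ≃ Im Ã` intertwining
each induced map `Ḡ_j` with the restriction `G'_j|_{Im Ã}`; i.e. `mc_λ(A_1,…,A_p)` is
equivalent to the tuple of restrictions of `G'_1,…,G'_p` to `Im Ã`. -/
theorem stmt_6 (n p : ℕ) (A : Fin p → Matrix (Fin n) (Fin n) ℂ) (lam : ℂ)
    (hlam : lam ≠ 0)
    (hdet : ((∑ j, A j) + lam • (1 : Matrix (Fin n) (Fin n) ℂ)).det ≠ 0) :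
    LinearMap.ker (-(∑ k, Gmat' n p A lam k)).mulVecLin = ⊥ ∧
    ∃ (hG : ∀ j : Fin p,
        LinearMap.ker (Atil n p A).mulVecLin ⊔
            LinearMap.ker (∑ k, Gmat n p A lam k).mulVecLin ≤
          Submodule.comap (Gmat n p A lam j).mulVecLin
            (LinearMap.ker (Atil n p A).mulVecLin ⊔
              LinearMap.ker (∑ k, Gmat n p A lam k).mulVecLin))
      (hW : ∀ (j : Fin p) (x : Fin p × Fin n → ℂ),
        x ∈ LinearMap.range (Atil n p A).mulVecLin →
          (Gmat' n p A lam j).mulVecLin x ∈ LinearMap.range (Atil n p A).mulVecLin),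
      ∃ φ : ((Fin p × Fin n → ℂ) ⧸
              (LinearMap.ker (Atil n p A).mulVecLin ⊔
                LinearMap.ker (∑ k, Gmat n p A lam k).mulVecLin)) ≃ₗ[ℂ]
            LinearMap.range (Atil n p A).mulVecLin,
        (∀ x : Fin p × Fin n → ℂ,
          φ (Submodule.Quotient.mk x) =
            ⟨(Atil n p A).mulVecLin x, LinearMap.mem_range_self _ x⟩) ∧
        ∀ j : Fin p,
          φ.toLinearMap ∘ₗ Submodule.mapQ _ _ (Gmat n p A lam j).mulVecLin (hG j) =
            ((Gmat' n p A lam j).mulVecLin.restrict (hW j)) ∘ₗ φ.toLinearMap := by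
  -- kernel of G'_0 is trivial
  have hker' : LinearMap.ker (-(∑ k, Gmat' n p A lam k)).mulVecLin = ⊥ := by
    rw [LinearMap.ker_eq_bot']
    intro x hx
    have hx' : (∑ k, Gmat' n p A lam k).mulVec x = 0 := by
      have := congrArg Neg.neg hx
      simpa only [Matrix.mulVecLin_apply, Matrix.neg_mulVec, neg_neg, neg_zero] using this
    have hs : (fun c => ∑ l, x (l,c)) = 0 := by
      apply Matrix.eq_zero_of_mulVec_eq_zero hdet
      funext a
      have h1 : ∀ i : Fin p, (A i).mulVec (fun c => ∑ l, x (l,c)) a + lam * x (i,a) = 0 := by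
        intro i
        rw [← sumG'_mulVec n p A lam x i a, hx']
        rfl
      have h2 : ∑ i, ((A i).mulVec (fun c => ∑ l, x (l,c)) a + lam * x (i,a)) = 0 := by
        simp [h1]
      rw [Finset.sum_add_distrib] at h2
      have e1 : ((∑ j, A j) + lam • (1 : Matrix (Fin n) (Fin n) ℂ)).mulVec
          (fun c => ∑ l, x (l,c)) a
          = (∑ i, (A i).mulVec (fun c => ∑ l, x (l,c)) a) + ∑ i, lam * x (i,a) := by
        rw [Matrix.add_mulVec, sum_mulVec']
        simp [Matrix.smul_mulVec, Matrix.one_mulVec, Finset.mul_sum]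
      rw [e1, h2]
      rfl
    have hx0 : ∀ i a, lam * x (i,a) = 0 := by
      intro i a
      have h1 := sumG'_mulVec n p A lam x i a
      rw [hx', hs] at h1
      simpa using h1.symm
    funext ⟨i,a⟩
    have h3 := (mul_eq_zero.mp (hx0 i a)).resolve_left hlam
    simpa using h3
  -- kernel of ∑ G_j is trivial
  have hL : LinearMap.ker (∑ k, Gmat n p A lam k).mulVecLin = ⊥ := by
    rw [LinearMap.ker_eq_bot']
    intro x hx
    have hx' : (∑ k, Gmat n p A lam k).mulVec x = 0 := hx
    set t : Fin n → ℂ := ∑ l, (A l).mulVec (fun c => x (l,c)) with ht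
    have h1 : ∀ i : Fin p, ∀ a : Fin n, t a + lam * x (i,a) = 0 := by
      intro i a
      rw [← sumG_mulVec n p A lam x i a, hx']
      rfl
    -- all blocks equal to v := -(1/lam) • t
    have hxv : ∀ i : Fin p, (fun a => x (i,a)) = fun a => -(lam⁻¹ * t a) := by
      intro i
      funext a
      have h3 : lam * x (i,a) = -(t a) := by linear_combination h1 i a
      calc x (i,a) = lam⁻¹ * (lam * x (i,a)) := by field_simp
        _ = lam⁻¹ * (-(t a)) := by rw [h3]
        _ = -(lam⁻¹ * t a) := by ring
    have hveq : ((∑ j, A j) + lam • (1 : Matrix (Fin n) (Fin n) ℂ)).mulVec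
        (fun a => -(lam⁻¹ * t a)) = 0 := by
      have h2 : (∑ j, A j).mulVec (fun a => -(lam⁻¹ * t a)) = t := by
        rw [sum_mulVec', ht]
        refine Finset.sum_congr rfl fun l _ => ?_
        rw [hxv l]
      funext a
      have h2a := congrFun h2 a
      simp only [Matrix.add_mulVec, Matrix.smul_mulVec, Matrix.one_mulVec,
        Pi.add_apply, Pi.smul_apply, smul_eq_mul, h2a, Pi.zero_apply]
      field_simp
      ring
    have hv : (fun a => -(lam⁻¹ * t a)) = 0 :=
      Matrix.eq_zero_of_mulVec_eq_zero hdet hveq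
    funext ⟨i,a⟩
    have := congrFun ((hxv i).trans hv) a
    simpa using this
  have hKL : LinearMap.ker (Atil n p A).mulVecLin ⊔
      LinearMap.ker (∑ k, Gmat n p A lam k).mulVecLin
      = LinearMap.ker (Atil n p A).mulVecLin := by
    rw [hL, sup_bot_eq]
  have hcomm : ∀ (j : Fin p) (x : Fin p × Fin n → ℂ),
      (Atil n p A).mulVec ((Gmat n p A lam j).mulVec x)
        = (Gmat' n p A lam j).mulVec ((Atil n p A).mulVec x) := by
    intro j x
    rw [Matrix.mulVec_mulVec, Matrix.mulVec_mulVec, gmat'_mul_atil]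
  have hG : ∀ j : Fin p,
      LinearMap.ker (Atil n p A).mulVecLin ⊔
          LinearMap.ker (∑ k, Gmat n p A lam k).mulVecLin ≤
        Submodule.comap (Gmat n p A lam j).mulVecLin
          (LinearMap.ker (Atil n p A).mulVecLin ⊔
            LinearMap.ker (∑ k, Gmat n p A lam k).mulVecLin) := by
    intro j x hx
    rw [hKL] at hx
    rw [Submodule.mem_comap, hKL]
    rw [LinearMap.mem_ker] at hx ⊢
    show (Atil n p A).mulVec ((Gmat n p A lam j).mulVec x) = 0
    rw [hcomm]
    have hx0 : (Atil n p A).mulVec x = 0 := hx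
    rw [hx0, Matrix.mulVec_zero]
  have hW : ∀ (j : Fin p) (x : Fin p × Fin n → ℂ),
      x ∈ LinearMap.range (Atil n p A).mulVecLin →
        (Gmat' n p A lam j).mulVecLin x ∈ LinearMap.range (Atil n p A).mulVecLin := by
    rintro j x ⟨y, rfl⟩
    exact ⟨(Gmat n p A lam j).mulVec y,
      by simpa [Matrix.mulVecLin_apply] using hcomm j y⟩
  refine ⟨hker', hG, hW, (Submodule.quotEquivOfEq _ _ hKL).trans
    (LinearMap.quotKerEquivRange (Atil n p A).mulVecLin), ?_, ?_⟩
  · intro x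
    apply Subtype.ext
    simp [Submodule.quotEquivOfEq_mk, LinearMap.quotKerEquivRange_apply_mk]
  · intro j
    refine Submodule.linearMap_qext _ (LinearMap.ext fun x => ?_)
    apply Subtype.ext
    simp only [LinearMap.coe_comp, Function.comp_apply, Submodule.mkQ_apply,
      Submodule.mapQ_apply, LinearEquiv.coe_coe, LinearEquiv.trans_apply,
      Submodule.quotEquivOfEq_mk, LinearMap.quotKerEquivRange_apply_mk,
      LinearMap.restrict_apply, Matrix.mulVecLin_apply]
    exact hcomm j x
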